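/- Let p, q be primes with q dividing (p^p-1)/(p-1), and let M in GL_p(F_p) have order q. Every element A of the normaliser of ⟨M⟩ in GL_p(F_p) satisfies A M A^{-1} = M^{p^j} for some j with 0 ≤ j < p. -/

import Mathlib

open Polynomial Matrix

lemma my_eval_charpoly {n : Type*} [Fintype n] [DecidableEq n] {R : Type*} [CommRing R]
    (N : Matrix n n R) (μ : R) :
    (N.charpoly).eval μ = (μ • (1 : Matrix n n R) - N).det := by
  rw [Matrix.charpoly, ← Polynomial.coe_evalRingHom, RingHom.map_det]
  congr 1
  ext i j
  by_cases h : i = j <;>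
    simp [Matrix.charmatrix_apply, h, Matrix.one_apply, Matrix.diagonal_apply]

lemma my_root_pow_p {p : ℕ} {K : Type*} [Field K] [CharP K p] [Fact p.Prime]
    (f : ZMod p →+* K) (P : Polynomial (ZMod p)) {x : K}
    (hx : (P.map f).eval x = 0) : (P.map f).eval (x ^ p) = 0 := by
  have h := Polynomial.hom_eval₂ P f (frobenius K p) x
  rw [Polynomial.eval_map] at hx ⊢
  rw [RingHom.ext_zmod ((frobenius K p).comp f) f] at h
  rw [hx, map_zero] at h
  simpa [frobenius_def] using h.symm

lemma my_q_ne_p {p q : ℕ} (hp : p.Prime) (hq : q.Prime)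
    (hdvd : q ∣ ∑ i ∈ Finset.range p, p ^ i) : q ≠ p := by
  intro heq
  haveI : Fact p.Prime := ⟨hp⟩
  rw [heq] at hdvd
  have h0 : ((∑ i ∈ Finset.range p, p ^ i : ℕ) : ZMod p) = 0 :=
    (ZMod.natCast_eq_zero_iff _ _).mpr hdvd
  obtain ⟨m, rfl⟩ : ∃ m, p = m + 1 := ⟨p - 1, (Nat.succ_pred_eq_of_pos hp.pos).symm⟩
  push_cast at h0
  rw [geom_sum_succ] at h0
  simp [ZMod.natCast_self] at h0

lemma my_orderOf_p {p q : ℕ} (hp : p.Prime) (hq : q.Prime)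
    (hdvd : q ∣ ∑ i ∈ Finset.range p, p ^ i) : orderOf ((p : ZMod q)) = p := by
  haveI : Fact q.Prime := ⟨hq⟩
  have hsum0 : (∑ i ∈ Finset.range p, (p : ZMod q) ^ i) = 0 := by
    have : ((∑ i ∈ Finset.range p, p ^ i : ℕ) : ZMod q) = 0 :=
      (ZMod.natCast_eq_zero_iff _ _).mpr hdvd
    push_cast at this
    exact this
  have hpp : (p : ZMod q) ^ p = 1 := by
    have h := geom_sum_mul (p : ZMod q) p
    rw [hsum0, zero_mul] at h
    have := h.symm
    rw [sub_eq_zero] at this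
    exact this
  rcases hp.eq_one_or_self_of_dvd _ (orderOf_dvd_of_pow_eq_one hpp) with h1 | h
  · exfalso
    have hp1 : (p : ZMod q) = 1 := orderOf_eq_one_iff.mp h1
    rw [hp1] at hsum0
    simp only [one_pow, Finset.sum_const, Finset.card_range, nsmul_eq_mul, mul_one] at hsum0
    rw [hp1] at hsum0
    exact one_ne_zero hsum0
  · exact h


theorem stmt_11 (p q : ℕ) (hp : p.Prime) (hq : q.Prime)
    (hdvd : q ∣ ∑ i ∈ Finset.range p, p ^ i)
    (M : GL (Fin p) (ZMod p)) (hM : orderOf M = q)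
    (A : GL (Fin p) (ZMod p)) (hA : A ∈ Subgroup.normalizer (Subgroup.zpowers M)) :
    ∃ j : ℕ, j < p ∧ A * M * A⁻¹ = M ^ (p ^ j) := by
  classical
  haveI : Fact p.Prime := ⟨hp⟩
  haveI : Fact q.Prime := ⟨hq⟩
  -- get k with M ^ k = A * M * A⁻¹
  have hfin : IsOfFinOrder M := by
    rw [← orderOf_pos_iff, hM]; exact hq.pos
  have hAM : A * M * A⁻¹ ∈ Subgroup.zpowers M :=
    (Subgroup.mem_normalizer_iff.mp hA M).mp (Subgroup.mem_zpowers M)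
  obtain ⟨k, hk⟩ : ∃ k : ℕ, M ^ k = A * M * A⁻¹ :=
    (Submonoid.mem_powers_iff _ _).mp (hfin.mem_powers_iff_mem_zpowers.mpr hAM)
  have hMq : M ^ q = 1 := by rw [← hM]; exact pow_orderOf_eq_one M
  have hM1 : M ≠ 1 := by
    intro h; rw [h, orderOf_one] at hM; exact hq.one_lt.ne hM
  -- move to the algebraic closure
  set K := AlgebraicClosure (ZMod p) with hK
  set f : ZMod p →+* K := algebraMap (ZMod p) K with hf
  haveI : CharP K p := charP_of_injective_algebraMap f.injective p
  set φ : GL (Fin p) (ZMod p) →* (Matrix (Fin p) (Fin p) K)ˣ :=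
    Units.map (f.mapMatrix).toMonoidHom with hφ
  set NM : (Matrix (Fin p) (Fin p) K)ˣ := φ M with hNM
  set NA : (Matrix (Fin p) (Fin p) K)ˣ := φ A with hNA
  set N : Matrix (Fin p) (Fin p) K := (NM : Matrix (Fin p) (Fin p) K) with hN
  set B : Matrix (Fin p) (Fin p) K := (NA : Matrix (Fin p) (Fin p) K) with hB
  set Bi : Matrix (Fin p) (Fin p) K := ((NA⁻¹ : (Matrix (Fin p) (Fin p) K)ˣ) :
    Matrix (Fin p) (Fin p) K) with hBi
  have hNmap : N = ((M : Matrix (Fin p) (Fin p) (ZMod p))).map f := rfl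
  have hNq : N ^ q = 1 := by
    have h1 : NM ^ q = 1 := by rw [hNM, ← _root_.map_pow, hMq, _root_.map_one]
    rw [hN, ← Units.val_pow_eq_pow_val, h1, Units.val_one]
  have hN1 : N ≠ 1 := by
    intro h
    apply hM1
    apply Units.ext
    have h2 : ((M : Matrix (Fin p) (Fin p) (ZMod p))).map f =
        (1 : Matrix (Fin p) (Fin p) (ZMod p)).map f := by
      rw [Matrix.map_one f (map_zero f) (map_one f)]
      exact hNmap ▸ h
    ext i j
    apply f.injective
    have := congrArg (fun X => X i j) h2
    simpa [Matrix.map_apply] using this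
  -- charpoly facts
  set P0 : Polynomial (ZMod p) := ((M : Matrix (Fin p) (Fin p) (ZMod p))).charpoly with hP0
  set Pk : Polynomial K := N.charpoly with hPkdef
  have hPk : Pk = P0.map f := by rw [hPkdef, hNmap, Matrix.charpoly_map]
  have hmonic : Pk.Monic := N.charpoly_monic
  have hPk0 : Pk ≠ 0 := hmonic.ne_zero
  have hdeg : Pk.natDegree = p := by
    rw [hPkdef, Matrix.charpoly_natDegree_eq_dim, Fintype.card_fin]
  have hsplits : Pk.Splits := IsAlgClosed.splits Pk
  -- existence of a root ζ ≠ 1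
  have hqK : (q : K) ≠ 0 := by
    have hnd : ¬ (p ∣ q) := fun hd =>
      (my_q_ne_p hp hq hdvd) ((Nat.prime_dvd_prime_iff_eq hp hq).mp hd).symm
    simpa [CharP.cast_eq_zero_iff K p q] using hnd
  have hex : ∃ ζ ∈ Pk.roots, ζ ≠ 1 := by
    by_contra hcon
    push_neg at hcon
    have hPkeq : Pk = (X - C (1 : K)) ^ p := by
      have he := hsplits.eq_prod_roots_of_monic hmonic
      have hmapeq : Pk.roots.map (fun a => X - C a)
          = Pk.roots.map (fun _ => X - C (1 : K)) :=
        Multiset.map_congr rfl (fun a ha => by rw [hcon a ha])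
      rw [hmapeq] at he
      rw [Multiset.map_const', Multiset.prod_replicate,
        (Polynomial.splits_iff_card_roots).mp hsplits, hdeg] at he
      exact he
    have hCH : Polynomial.aeval N Pk = 0 := N.aeval_self_charpoly
    rw [hPkeq] at hCH
    have hNil : (N - 1) ^ p = 0 := by
      simpa [_root_.map_pow, map_sub, Polynomial.aeval_X, Polynomial.aeval_C] using hCH
    set g : K[X] := ∑ i ∈ Finset.range q, X ^ i with hg
    have hg1 : g.eval 1 = (q : K) := by simp [hg]
    have hnd : ¬ (X - C (1 : K)) ∣ g := by
      rw [Polynomial.dvd_iff_isRoot]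
      intro hr
      rw [Polynomial.IsRoot, hg1] at hr
      exact hqK hr
    have hcop : IsCoprime ((X - C (1 : K)) ^ p) g :=
      ((Polynomial.irreducible_X_sub_C (1 : K)).coprime_iff_not_dvd.mpr hnd).pow_left
    obtain ⟨u, v, huv⟩ := hcop
    have happ := congrArg (Polynomial.aeval N) huv
    simp only [map_add, _root_.map_mul, _root_.map_pow, map_sub, Polynomial.aeval_X,
      Polynomial.aeval_C, _root_.map_one] at happ
    rw [hNil, mul_zero, zero_add] at happ
    have hgN : Polynomial.aeval N g * (N - 1) = 0 := by
      have h2 := congrArg (Polynomial.aeval N) (geom_sum_mul (X : K[X]) q)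
      simp only [_root_.map_mul, map_sub, _root_.map_pow, map_sum, Polynomial.aeval_X, _root_.map_one] at h2
      simp only [hg, map_sum, _root_.map_pow, Polynomial.aeval_X]
      rw [h2, hNq, sub_self]
    have hfin : N - 1 = 0 := by
      calc N - 1 = 1 * (N - 1) := (one_mul _).symm
      _ = (Polynomial.aeval N v * Polynomial.aeval N g) * (N - 1) := by rw [happ]
      _ = Polynomial.aeval N v * (Polynomial.aeval N g * (N - 1)) := mul_assoc _ _ _
      _ = 0 := by rw [hgN, mul_zero]
    exact hN1 (by rwa [sub_eq_zero] at hfin)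
  obtain ⟨ζ, hζroot, hζ1⟩ := hex
  have hζeval : Pk.eval ζ = 0 := (Polynomial.mem_roots'.mp hζroot).2
  -- eigenvector
  have hdet : (ζ • (1 : Matrix (Fin p) (Fin p) K) - N).det = 0 := by
    rw [← my_eval_charpoly]; exact hζeval
  obtain ⟨v, hv0, hv⟩ := Matrix.exists_mulVec_eq_zero_iff.mpr hdet
  have hNv : N *ᵥ v = ζ • v := by
    rw [Matrix.sub_mulVec, sub_eq_zero] at hv
    rw [← hv, Matrix.smul_mulVec, Matrix.one_mulVec]
  have hpow : ∀ m : ℕ, N ^ m *ᵥ v = ζ ^ m • v := by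
    intro m
    induction m with
    | zero => simp
    | succ m ih =>
      rw [pow_succ', pow_succ', ← Matrix.mulVec_mulVec, ih, Matrix.mulVec_smul, hNv,
        smul_smul, mul_comm]
  -- ζ has order q
  have hζq : ζ ^ q = 1 := by
    have h1 := hpow q
    rw [hNq, Matrix.one_mulVec] at h1
    have h2 : (ζ ^ q - 1) • v = 0 := by
      rw [sub_smul, ← h1, one_smul, sub_self]
    rcases smul_eq_zero.mp h2 with h | h
    · rwa [sub_eq_zero] at h
    · exact absurd h hv0
  have hordζ : orderOf ζ = q := orderOf_eq_prime hζq hζ1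
  -- Frobenius orbit consists of roots
  have hfr : ∀ i : ℕ, Pk.eval (ζ ^ p ^ i) = 0 := by
    intro i
    induction i with
    | zero => simpa using hζeval
    | succ i ih =>
      have h3 := my_root_pow_p f P0 (x := ζ ^ p ^ i) (by rwa [← hPk])
      rw [← hPk] at h3
      rwa [← pow_mul, ← pow_succ] at h3
  -- ζ ^ k is a root
  have hkc : N ^ k = B * N * Bi := by
    have h1 : NM ^ k = NA * NM * NA⁻¹ := by
      rw [hNM, hNA, ← _root_.map_pow, hk, _root_.map_mul, _root_.map_mul, map_inv]
    rw [hN, ← Units.val_pow_eq_pow_val, h1]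
    simp [Units.val_mul, hB, hBi]
  have hBiB : Bi * B = 1 := by
    rw [hBi, hB, ← Units.val_mul, inv_mul_cancel, Units.val_one]
  have hBBi : B * Bi = 1 := by
    rw [hBi, hB, ← Units.val_mul, mul_inv_cancel, Units.val_one]
  set w : Fin p → K := Bi *ᵥ v with hwdef
  have hw0 : w ≠ 0 := by
    intro h0
    apply hv0
    have h1 : B *ᵥ w = v := by
      rw [hwdef, Matrix.mulVec_mulVec, hBBi, Matrix.one_mulVec]
    rw [h0, Matrix.mulVec_zero] at h1
    exact h1.symm
  have hNw : N *ᵥ w = ζ ^ k • w := by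
    have h2 : N *ᵥ w = Bi *ᵥ (N ^ k *ᵥ v) := by
      rw [hwdef, Matrix.mulVec_mulVec, Matrix.mulVec_mulVec, hkc,
        ← mul_assoc Bi (B * N) Bi, ← mul_assoc Bi B N, hBiB, one_mul]
    rw [h2, hpow k, Matrix.mulVec_smul]
  have hζk : Pk.eval (ζ ^ k) = 0 := by
    rw [my_eval_charpoly]
    rw [← Matrix.exists_mulVec_eq_zero_iff]
    exact ⟨w, hw0, by
      rw [Matrix.sub_mulVec, hNw, Matrix.smul_mulVec, Matrix.one_mulVec, sub_self]⟩
  -- transfer ζ-power equalities to congruences mod q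
  have hζab : ∀ a b : ℕ, ζ ^ a = ζ ^ b → a ≡ b [MOD q] := by
    intro a b hab
    have hu : IsUnit ζ := IsUnit.of_pow_eq_one hζq hq.ne_zero
    have hou : orderOf hu.unit = q := by
      rw [← orderOf_units, hu.unit_spec, hordζ]
    have hab' : hu.unit ^ a = hu.unit ^ b := by
      apply Units.ext
      rw [Units.val_pow_eq_pow_val, Units.val_pow_eq_pow_val, hu.unit_spec]
      exact hab
    rw [← hou]
    exact pow_eq_pow_iff_modEq.mp hab'
  -- order of p mod q is p, injectivity of the Frobenius orbit
  have hord_p : orderOf ((p : ZMod q)) = p := my_orderOf_p hp hq hdvd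
  have hinj : Set.InjOn (fun i => ζ ^ p ^ i) (Finset.range p : Set ℕ) := by
    intro i hi j hj hij
    simp only [Finset.coe_range, Set.mem_Iio] at hi hj
    dsimp only at hij
    have h1 : p ^ i ≡ p ^ j [MOD q] := hζab _ _ hij
    have h2 : ((p : ZMod q)) ^ i = ((p : ZMod q)) ^ j := by
      have h3 := (ZMod.natCast_eq_natCast_iff _ _ _).mpr h1
      push_cast at h3
      exact h3
    exact pow_injOn_Iio_orderOf (by rw [hord_p]; exact hi) (by rw [hord_p]; exact hj) h2
  set S : Finset K := (Finset.range p).image (fun i => ζ ^ p ^ i) with hS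
  have hScard : S.card = p := by
    rw [hS, Finset.card_image_of_injOn hinj, Finset.card_range]
  have hSsub : S ⊆ Pk.roots.toFinset := by
    intro x hx
    rw [hS, Finset.mem_image] at hx
    obtain ⟨i, hi, rfl⟩ := hx
    rw [Multiset.mem_toFinset]
    exact Polynomial.mem_roots'.mpr ⟨hPk0, hfr i⟩
  have hcard_le : Pk.roots.toFinset.card ≤ p := by
    refine le_trans (Multiset.toFinset_card_le _) (le_trans (Polynomial.card_roots' Pk) ?_)
    rw [hdeg]
  have hSeq : S = Pk.roots.toFinset :=
    Finset.eq_of_subset_of_card_le hSsub (by rw [hScard]; exact hcard_le)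
  have hmem : ζ ^ k ∈ S := by
    rw [hSeq, Multiset.mem_toFinset]
    exact Polynomial.mem_roots'.mpr ⟨hPk0, hζk⟩
  rw [hS, Finset.mem_image] at hmem
  obtain ⟨j, hj, hje⟩ := hmem
  refine ⟨j, Finset.mem_range.mp hj, ?_⟩
  rw [← hk]
  have hmod : k ≡ p ^ j [MOD orderOf M] := by
    rw [hM]
    exact hζab _ _ hje.symm
  exact pow_eq_pow_iff_modEq.mpr hmod
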